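/- Let V_1, V_2 be subspaces of a real inner product space with γ = sup over nonzero v_1 ∈ V_1, v_2 ∈ V_2 of (v_1, v_2)/(‖v_1‖‖v_2‖) < 1. Then for all u_1, ū_1 ∈ V_1 and u_2, ū_2 ∈ V_2: ‖(u_1 + u_2) - (ū_1 + ū_2)‖² ≥ (1 - γ²)‖u_2 - ū_2‖². -/
import Mathlib


open RealInnerProductSpace

theorem stmt7 {V : Type*} [NormedAddCommGroup V] [InnerProductSpace ℝ V]
    (V1 V2 : Submodule ℝ V) (γ : ℝ) (hγ1 : γ < 1)
    (hγ : ∀ v1 ∈ V1, ∀ v2 ∈ V2, ⟪v1, v2⟫ ≤ γ * ‖v1‖ * ‖v2‖) :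
    ∀ u1 ∈ V1, ∀ w1 ∈ V1, ∀ u2 ∈ V2, ∀ w2 ∈ V2,
      ‖(u1 + u2) - (w1 + w2)‖^2 ≥ (1 - γ^2) * ‖u2 - w2‖^2 := by
  intro u1 hu1 w1 hw1 u2 hu2 w2 hw2
  set a := u1 - w1 with ha
  set b := u2 - w2 with hb
  have hne : (u1 + u2) - (w1 + w2) = a + b := by rw [ha, hb]; abel
  rw [hne]
  have h1 : ⟪-a, b⟫ ≤ γ * ‖-a‖ * ‖b‖ :=
    hγ (-a) (neg_mem (sub_mem hu1 hw1)) b (sub_mem hu2 hw2)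
  rw [inner_neg_left, norm_neg] at h1
  have hexp : ‖a + b‖^2 = ‖a‖^2 + 2 * ⟪a, b⟫ + ‖b‖^2 := by
    rw [← real_inner_self_eq_norm_sq, ← real_inner_self_eq_norm_sq,
      ← real_inner_self_eq_norm_sq, inner_add_add_self, real_inner_comm b a]
    ring
  nlinarith [sq_nonneg (‖a‖ - γ * ‖b‖), norm_nonneg a, norm_nonneg b]
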